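/- Let G be the 3×3 complex matrix with rows (‖α‖², −Ω/2, −Ω/2), (−e^{iβ}⟨α|ΔSλ⟩ + Ω, b, 0), (−e^{−iβ}⟨ΔSλ|α⟩ + Ω, 0, b̄), where b = (κ²/2)‖α‖² − i(Δω − Im⟨S⁺λ|P_α S⁻λ⟩), Ω = 2|⟨α|S⁻λ⟩|, β = arg{−⟨S⁻λ|α⟩}. Then det G = ‖α‖²[(Δω)² + Γ²/4] where Γ² = κ⁴‖α‖⁴ + 4κ²‖α‖² Re⟨S⁻λ|P_α(S⁺+S⁻)λ⟩ − 4(Im⟨S⁺λ|P_α S⁻λ⟩)². -/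

import Mathlib

open Complex

/-- The orthogonal projection `P_α` onto the span of the (nonzero) vector `α`:
`P_α x = ⟨α̃|x⟩ α̃` with `α̃ = α/‖α‖`. -/
noncomputable def projAlpha {Z : Type*} [NormedAddCommGroup Z] [InnerProductSpace ℂ Z]
    (α x : Z) : Z :=
  (inner ℂ (((‖α‖ : ℝ)⁻¹ : ℂ) • α) x : ℂ) • (((‖α‖ : ℝ)⁻¹ : ℂ) • α)

lemma inner_projAlpha {Z : Type*} [NormedAddCommGroup Z] [InnerProductSpace ℂ Z]
    (α : Z) (hα : α ≠ 0) (u x : Z) :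
    (inner ℂ u (projAlpha α x) : ℂ) =
      (inner ℂ α x : ℂ) * (inner ℂ u α : ℂ) / ((‖α‖ : ℂ) ^ 2) := by
  have hn : (‖α‖ : ℂ) ≠ 0 := by
    simpa using norm_ne_zero_iff.mpr hα
  simp only [projAlpha, inner_smul_left, inner_smul_right, map_inv₀, Complex.conj_ofReal]
  rw [eq_div_iff (pow_ne_zero 2 hn)]
  field_simp

/-- `det G = ‖α‖²[(Δω)² + Γ²/4]` for the drift matrix `G` of the two-level atom master
equation, with `b = (κ²/2)‖α‖² − i(Δω − Im⟨S⁺λ|P_α S⁻λ⟩)`, `Ω = 2|⟨α|S⁻λ⟩|`,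
`β = arg(−⟨S⁻λ|α⟩)` and
`Γ² = κ⁴‖α‖⁴ + 4κ²‖α‖² Re⟨S⁻λ|P_α(S⁺+S⁻)λ⟩ − 4(Im⟨S⁺λ|P_α S⁻λ⟩)²`. -/
theorem det_G_eq {Z : Type*} [NormedAddCommGroup Z] [InnerProductSpace ℂ Z]
    (α lam : Z) (hα : α ≠ 0) (Sp Sm : Z ≃ₗᵢ[ℂ] Z) (Δω : ℝ)
    (κ2 Ω β Γ2 : ℝ) (b : ℂ) (G : Matrix (Fin 3) (Fin 3) ℂ)
    (hκ : κ2 = 1 + ‖Sp lam - Sm lam‖ ^ 2 / ‖α‖ ^ 2)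
    (hΩ : Ω = 2 * ‖(inner ℂ α (Sm lam) : ℂ)‖)
    (hβ : β = Complex.arg (-(inner ℂ (Sm lam) α : ℂ)))
    (hb : b = ((κ2 / 2 * ‖α‖ ^ 2 : ℝ) : ℂ) -
      Complex.I * (((Δω : ℝ) : ℂ) - (((inner ℂ (Sp lam) (projAlpha α (Sm lam)) : ℂ)).im : ℂ)))
    (hΓ : Γ2 = κ2 ^ 2 * ‖α‖ ^ 4 +
      4 * κ2 * ‖α‖ ^ 2 * ((inner ℂ (Sm lam) (projAlpha α (Sp lam + Sm lam)) : ℂ)).re -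
      4 * ((inner ℂ (Sp lam) (projAlpha α (Sm lam)) : ℂ)).im ^ 2)
    (hG : G = !![((‖α‖ ^ 2 : ℝ) : ℂ), -((Ω : ℝ) : ℂ) / 2, -((Ω : ℝ) : ℂ) / 2;
      -Complex.exp (Complex.I * β) * (inner ℂ α (Sp lam - Sm lam) : ℂ) + ((Ω : ℝ) : ℂ), b, 0;
      -Complex.exp (-(Complex.I * β)) * (inner ℂ (Sp lam - Sm lam) α : ℂ) + ((Ω : ℝ) : ℂ), 0,
        (starRingEnd ℂ) b]) :
    G.det = ((‖α‖ ^ 2 : ℝ) : ℂ) * (((Δω ^ 2 + Γ2 / 4 : ℝ)) : ℂ) := by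
  have hn : (‖α‖ : ℂ) ≠ 0 := by simpa using norm_ne_zero_iff.mpr hα
  set c : ℂ := inner ℂ (Sm lam) α with hc
  set u : ℂ := inner ℂ α (Sp lam) with hu
  -- relations
  have hcs : (inner ℂ α (Sm lam) : ℂ) = (starRingEnd ℂ) c := by
    rw [hc, inner_conj_symm]
  have hus : (inner ℂ (Sp lam) α : ℂ) = (starRingEnd ℂ) u := by
    rw [hu, inner_conj_symm]
  have hE1 : ((Ω : ℝ) : ℂ) * Complex.exp (Complex.I * β) = -2 * c := by
    rw [hΩ, hβ, hcs, mul_comm Complex.I]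
    push_cast
    rw [Complex.norm_conj, ← norm_neg c, mul_assoc, Complex.norm_mul_exp_arg_mul_I]
    ring
  have hE2 : ((Ω : ℝ) : ℂ) * Complex.exp (-(Complex.I * β)) = -2 * (starRingEnd ℂ) c := by
    have : Complex.exp (-(Complex.I * β)) = (starRingEnd ℂ) (Complex.exp (Complex.I * β)) := by
      rw [← Complex.exp_conj]
      congr 1
      simp [Complex.conj_ofReal]
    rw [this]
    calc ((Ω : ℝ) : ℂ) * (starRingEnd ℂ) (Complex.exp (Complex.I * β))
        = (starRingEnd ℂ) (((Ω : ℝ) : ℂ) * Complex.exp (Complex.I * β)) := by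
          rw [map_mul, Complex.conj_ofReal]
      _ = -2 * (starRingEnd ℂ) c := by 
          rw [hE1, show ((-2 : ℂ)) = (((-2 : ℝ)) : ℂ) by norm_num, map_mul, Complex.conj_ofReal]
  have hΩ2 : ((Ω : ℝ) : ℂ) ^ 2 = 4 * (c * (starRingEnd ℂ) c) := by
    rw [hΩ, hcs, Complex.mul_conj]
    push_cast [Complex.norm_conj, ← Complex.sq_norm]
    ring
  have z1 : (inner ℂ (Sp lam) (projAlpha α (Sm lam)) : ℂ)
      = (starRingEnd ℂ) c * (starRingEnd ℂ) u / ((‖α‖ : ℂ)) ^ 2 := by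
    rw [inner_projAlpha α hα, hcs, hus]
  have z2 : (inner ℂ (Sm lam) (projAlpha α (Sp lam + Sm lam)) : ℂ)
      = (u + (starRingEnd ℂ) c) * c / ((‖α‖ : ℂ)) ^ 2 := by
    rw [inner_projAlpha α hα, inner_add_right, hcs, ← hu, ← hc]
  have hM2 : (starRingEnd ℂ) c * (starRingEnd ℂ) u - c * u
      = 2 * (((inner ℂ (Sp lam) (projAlpha α (Sm lam)) : ℂ)).im : ℂ) * Complex.I
        * ((‖α‖ : ℂ)) ^ 2 := by
    have h1 := Complex.sub_conj ((inner ℂ (Sp lam) (projAlpha α (Sm lam)) : ℂ))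
    rw [z1] at h1
    simp only [map_div₀, map_mul, Complex.conj_conj, map_pow, Complex.conj_ofReal] at h1
    push_cast at h1
    field_simp at h1
    rw [← z1] at h1
    linear_combination h1
  have hR2 : (u + (starRingEnd ℂ) c) * c + ((starRingEnd ℂ) u + c) * (starRingEnd ℂ) c
      = 2 * (((inner ℂ (Sm lam) (projAlpha α (Sp lam + Sm lam)) : ℂ)).re : ℂ)
        * ((‖α‖ : ℂ)) ^ 2 := by
    have h1 := Complex.add_conj ((inner ℂ (Sm lam) (projAlpha α (Sp lam + Sm lam)) : ℂ))
    rw [z2] at h1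
    simp only [map_div₀, map_mul, map_add, Complex.conj_conj, map_pow,
      Complex.conj_ofReal] at h1
    push_cast at h1
    field_simp at h1
    rw [← z2] at h1
    linear_combination h1
  have hX : (inner ℂ α (Sp lam - Sm lam) : ℂ) = u - (starRingEnd ℂ) c := by
    rw [inner_sub_right, hcs, ← hu]
  have hY : (inner ℂ (Sp lam - Sm lam) α : ℂ) = (starRingEnd ℂ) u - c := by
    rw [inner_sub_left, hus, ← hc]
  have hbb : (starRingEnd ℂ) b = ((κ2 / 2 * ‖α‖ ^ 2 : ℝ) : ℂ) +
      Complex.I * (((Δω : ℝ) : ℂ)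
        - (((inner ℂ (Sp lam) (projAlpha α (Sm lam)) : ℂ)).im : ℂ)) := by
    rw [hb]
    simp only [map_sub, map_mul, Complex.conj_I, Complex.conj_ofReal]
    ring
  rw [hG, Matrix.det_fin_three]
  simp only [Matrix.of_apply, Matrix.cons_val', Matrix.cons_val_zero, Matrix.cons_val_one,
    Matrix.head_cons, Matrix.empty_val', Matrix.cons_val_fin_one, Matrix.head_fin_const,
    Matrix.cons_val_two, Matrix.tail_cons]
  rw [hX, hY, hbb, hb, hΓ]
  push_cast
  set M : ℂ := (((inner ℂ (Sp lam) (projAlpha α (Sm lam)) : ℂ)).im : ℂ) with hMdef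
  set R : ℂ := (((inner ℂ (Sm lam) (projAlpha α (Sp lam + Sm lam)) : ℂ)).re : ℂ) with hRdef
  set A : ℂ := ((‖α‖ : ℝ) : ℂ) with hAdef
  set d : ℂ := ((Δω : ℝ) : ℂ) with hddef
  set k : ℂ := ((κ2 : ℝ) : ℂ) with hkdef
  linear_combination
    (-(u - (starRingEnd ℂ) c) * (k / 2 * A ^ 2 + Complex.I * (d - M)) / 2) * hE1 +
    (-((starRingEnd ℂ) u - c) * (k / 2 * A ^ 2 - Complex.I * (d - M)) / 2) * hE2 +
    (k * A ^ 2 / 2) * hΩ2 +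
    (-(Complex.I) * (d - M)) * hM2 +
    (k * A ^ 2 / 2) * hR2 +
    (-(A ^ 2 * (d - M) ^ 2) - 2 * M * (d - M) * A ^ 2) * Complex.I_sq
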